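/- For every m ≥ 1, all n, k ∈ ℕ and every r > 0 there exists a constant C = C(n,k) > 0 such that for every smooth function f on the closed ball B̄_r ⊂ ℝ^m that is flat at the origin, C^{-1} · |f|_{n,k,r} ≤ ⟨f⟩_{n,k,r} ≤ C · |f|_{n,k,r}; that is, the two families of weighted norms on flat functions are equivalent. -/

import Mathlib

open Metric Set

namespace FlatAux


lemma le_coe_top (q : ℕ) : ((q : ℕ∞) : WithTop ℕ∞) ≤ ((⊤ : ℕ∞) : WithTop ℕ∞) := by
  exact_mod_cast le_top

lemma zzn {t : ℝ} (ht : t ≠ 0) (a b : ℤ) (c : ℕ) :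
    t ^ a * t ^ b * t ^ (c : ℕ) = t ^ (a + b + (c : ℤ)) := by
  rw [← zpow_natCast t c, ← zpow_add₀ ht, ← zpow_add₀ ht]

lemma zpnn {t : ℝ} (ht : t ≠ 0) (a : ℤ) (b c : ℕ) :
    t ^ a * t ^ (b : ℕ) * t ^ (c : ℕ) = t ^ (a + (b : ℤ) + (c : ℤ)) := by
  rw [← zpow_natCast t b, ← zpow_natCast t c, ← zpow_add₀ ht, ← zpow_add₀ ht]

lemma zp2 {t : ℝ} (ht : t ≠ 0) (a : ℤ) (c : ℕ) :
    t ^ a * t ^ (c : ℕ) = t ^ (a + (c : ℤ)) := by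
  rw [← zpow_natCast t c, ← zpow_add₀ ht]


variable {m : ℕ}

local notation "E" => EuclideanSpace ℝ (Fin m)



lemma contDiffAt_norm_zpow (e : ℤ) {x : EuclideanSpace ℝ (Fin m)} (hx : x ≠ 0) :
    ContDiffAt ℝ (⊤ : ℕ∞) (fun y : E => ‖y‖ ^ e) x := by
  have hn : ContDiffAt ℝ (⊤ : ℕ∞) (fun y : E => ‖y‖) x := contDiffAt_norm ℝ hx
  rcases le_or_gt 0 e with he | he
  · obtain ⟨a, rfl⟩ := Int.eq_ofNat_of_zero_le he
    simp only [zpow_natCast]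
    exact hn.pow a
  · have h1 : e = -(e.natAbs : ℤ) := by omega
    have h2 : (fun y : E => ‖y‖ ^ e) = fun y : E => (‖y‖ ^ (e.natAbs : ℕ))⁻¹ := by
      funext y
      conv_lhs => rw [h1]
      rw [zpow_neg, zpow_natCast]
    rw [h2]
    exact (hn.pow e.natAbs).inv (pow_ne_zero _ (norm_ne_zero_iff.2 hx))

lemma contDiffOn_norm_zpow (e : ℤ) :
    ContDiffOn ℝ (⊤ : ℕ∞) (fun y : E => ‖y‖ ^ e) {(0 : E)}ᶜ := fun x hx =>
  (contDiffAt_norm_zpow e hx).contDiffWithinAt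

/-- transfer of `iteratedFDerivWithin` from a larger to a smaller unique-diff set -/
lemma iteratedFDerivWithin_subset_eq {F : Type*} [NormedAddCommGroup F] [NormedSpace ℝ F]
    {f : EuclideanSpace ℝ (Fin m) → F} {s t : Set (EuclideanSpace ℝ (Fin m))}
    (hst : t ⊆ s) (hs : UniqueDiffOn ℝ s) (ht : UniqueDiffOn ℝ t)
    {N : ℕ} (hf : ContDiffOn ℝ (N : ℕ∞) f s) {q : ℕ} (hq : q ≤ N) {x : E} (hx : x ∈ t) :
    iteratedFDerivWithin ℝ q f t x = iteratedFDerivWithin ℝ q f s x :=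
  (((hf.ftaylorSeriesWithin hs).mono hst).eq_iteratedFDerivWithin_of_uniqueDiffOn
    (by exact_mod_cast hq) ht hx).symm



local notation "Ω" => ({(0 : EuclideanSpace ℝ (Fin m))}ᶜ : Set (EuclideanSpace ℝ (Fin m)))


lemma weight_scale (e : ℤ) (q : ℕ) {c : ℝ} (hc : 0 < c) {x : EuclideanSpace ℝ (Fin m)}
    (hx : x ≠ 0) :
    ‖iteratedFDerivWithin ℝ q (fun y : E => ‖y‖ ^ e) Ω (c • x)‖
      = c ^ (e - q) * ‖iteratedFDerivWithin ℝ q (fun y : E => ‖y‖ ^ e) Ω x‖ := by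
  have uΩ : UniqueDiffOn ℝ Ω := isOpen_compl_singleton.uniqueDiffOn
  set w : E → ℝ := fun y : E => ‖y‖ ^ e with hw
  set g : E →L[ℝ] E := c • ContinuousLinearMap.id ℝ (EuclideanSpace ℝ (Fin m)) with hg
  have hgapp : ∀ y : E, g y = c • y := by intro y; simp [hg]
  have hpre : g ⁻¹' Ω = Ω := by
    ext y
    simp [hgapp, smul_eq_zero, hc.ne']
  have hxΩ : x ∈ Ω := hx
  have hgx : g x ∈ Ω := by
    simp only [mem_compl_iff, mem_singleton_iff, hgapp]
    simp [smul_eq_zero, hc.ne', hx]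
  have key := g.iteratedFDerivWithin_comp_right ((contDiffOn_norm_zpow e).of_le (le_coe_top q) :
      ContDiffOn ℝ (q : ℕ∞) w Ω) uΩ (by rw [hpre]; exact uΩ) hgx (by exact_mod_cast le_refl q)
  rw [hpre] at key
  -- LHS : w ∘ g = c^e • w
  have hcomp : (w ∘ g) = (c ^ e : ℝ) • w := by
    funext y
    simp only [Function.comp_apply, hw, Pi.smul_apply, smul_eq_mul, hgapp]
    rw [norm_smul, Real.norm_eq_abs, abs_of_pos hc, mul_zpow]
  have hsmul1 : iteratedFDerivWithin ℝ q (w ∘ g) Ω x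
      = (c ^ e : ℝ) • iteratedFDerivWithin ℝ q w Ω x := by
    rw [hcomp]
    exact iteratedFDerivWithin_const_smul_apply (((contDiffOn_norm_zpow e) x hxΩ).of_le (le_coe_top q)) uΩ hxΩ
  -- RHS : compCLM = c^q smul
  have hsmul2 : (iteratedFDerivWithin ℝ q w Ω (g x)).compContinuousLinearMap (fun _ => g)
      = (c ^ (q : ℕ) : ℝ) • iteratedFDerivWithin ℝ q w Ω (g x) := by
    ext v
    simp only [ContinuousMultilinearMap.compContinuousLinearMap_apply,
      ContinuousMultilinearMap.smul_apply, hgapp]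
    have hms := (iteratedFDerivWithin ℝ q w Ω (g x)).map_smul_univ (fun _ : Fin q => c) v
    simp only [Finset.prod_const, Finset.card_univ, Fintype.card_fin] at hms
    exact hms
  rw [hsmul2, hsmul1] at key
  have hnorm : (c ^ e : ℝ) * ‖iteratedFDerivWithin ℝ q w Ω x‖
      = (c ^ (q : ℕ) : ℝ) * ‖iteratedFDerivWithin ℝ q w Ω (g x)‖ := by
    have := congrArg norm key
    rwa [norm_smul, norm_smul, Real.norm_eq_abs, Real.norm_eq_abs, abs_of_pos (zpow_pos hc e),
      abs_of_pos (pow_pos hc q)] at this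
  have hgx' : g x = c • x := hgapp x
  rw [hgx'] at hnorm
  have hcq : (0:ℝ) < c ^ (q : ℕ) := pow_pos hc q
  have h1 : c ^ (e - (q:ℤ)) * c ^ (q:ℕ) = c ^ e := by
    rw [← zpow_natCast c q, ← zpow_add₀ hc.ne']
    norm_num
  apply mul_left_cancel₀ hcq.ne'
  calc c ^ (q:ℕ) * ‖iteratedFDerivWithin ℝ q w Ω (c • x)‖
      = c ^ e * ‖iteratedFDerivWithin ℝ q w Ω x‖ := by linarith [hnorm]
    _ = c ^ (q:ℕ) * (c ^ (e - (q:ℤ)) * ‖iteratedFDerivWithin ℝ q w Ω x‖) := by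
        rw [← h1]; ring

lemma weight_bound (N : ℕ) (e : ℤ) : ∃ C : ℝ, 0 < C ∧ ∀ q ≤ N, ∀ x : EuclideanSpace ℝ (Fin m),
    x ≠ 0 → ‖iteratedFDerivWithin ℝ q (fun y : E => ‖y‖ ^ e) Ω x‖ ≤ C * ‖x‖ ^ (e - q) := by
  have uΩ : UniqueDiffOn ℝ Ω := isOpen_compl_singleton.uniqueDiffOn
  have H : ∀ q : ℕ, ∃ Cq : ℝ, ∀ v : E, ‖v‖ = 1 →
      ‖iteratedFDerivWithin ℝ q (fun y : E => ‖y‖ ^ e) Ω v‖ ≤ Cq := by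
    intro q
    have hcont : ContinuousOn (fun v : E =>
        iteratedFDerivWithin ℝ q (fun y : E => ‖y‖ ^ e) Ω v) Ω :=
      (contDiffOn_norm_zpow e).continuousOn_iteratedFDerivWithin (le_coe_top q) uΩ
    have hsub : sphere (0 : E) 1 ⊆ Ω := by
      intro v hv
      simp only [mem_sphere_zero_iff_norm] at hv
      simp only [mem_compl_iff, mem_singleton_iff]
      intro h0; rw [h0] at hv; simp at hv
    obtain ⟨Cq, hCq⟩ := (isCompact_sphere (0 : E) 1).exists_bound_of_continuousOn
      (hcont.mono hsub)
    exact ⟨Cq, fun v hv => hCq v (mem_sphere_zero_iff_norm.2 hv)⟩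
  choose Cq hCq using H
  refine ⟨1 + ∑ q' ∈ Finset.range (N + 1), max (Cq q') 0, by positivity, ?_⟩
  intro q hq x hx
  have ht : (0:ℝ) < ‖x‖ := norm_pos_iff.2 hx
  set v : E := ‖x‖⁻¹ • x with hv
  have hv1 : ‖v‖ = 1 := by
    rw [hv, norm_smul, Real.norm_eq_abs, abs_of_pos (inv_pos.2 ht), inv_mul_cancel₀ ht.ne']
  have hxv : x = ‖x‖ • v := (smul_inv_smul₀ ht.ne' x).symm
  have hvne : v ≠ 0 := by intro h0; rw [h0] at hv1; simp at hv1
  have hscale := weight_scale (m := m) e q ht hvne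
  rw [← hxv] at hscale
  rw [hscale]
  have hle : Cq q ≤ 1 + ∑ q' ∈ Finset.range (N + 1), max (Cq q') 0 := by
    have h1 : Cq q ≤ max (Cq q) 0 := le_max_left _ _
    have h2 : max (Cq q) 0 ≤ ∑ q' ∈ Finset.range (N + 1), max (Cq q') 0 :=
      Finset.single_le_sum (f := fun q' => max (Cq q') 0) (fun i _ => le_max_right _ _)
        (Finset.mem_range.2 (by omega : q < N + 1))
    linarith
  have := hCq q v hv1
  have hzp : (0:ℝ) < ‖x‖ ^ (e - q) := zpow_pos ht _
  calc ‖x‖ ^ (e - (q:ℤ)) * ‖iteratedFDerivWithin ℝ q (fun y : E => ‖y‖ ^ e) Ω v‖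
      ≤ ‖x‖ ^ (e - (q:ℤ)) * Cq q := by
        exact mul_le_mul_of_nonneg_left this hzp.le
    _ ≤ ‖x‖ ^ (e - (q:ℤ)) * (1 + ∑ q' ∈ Finset.range (N + 1), max (Cq q') 0) :=
        mul_le_mul_of_nonneg_left hle hzp.le
    _ = _ := by ring




/-- Flat functions decay faster than any power: version on the full closed ball. -/
lemma decay_ball {r : ℝ} (hr : 0 < r) {N : ℕ} {f : EuclideanSpace ℝ (Fin m) → ℝ}
    (hs : UniqueDiffOn ℝ (closedBall (0 : EuclideanSpace ℝ (Fin m)) r))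
    (hf : ContDiffOn ℝ (N : ℕ∞) f (closedBall 0 r))
    (hflat : ∀ i : ℕ, iteratedFDerivWithin ℝ i f (closedBall 0 r) 0 = 0) :
    ∀ j i : ℕ, i + j ≤ N → ∀ x ∈ closedBall (0 : E) r, ∀ B : ℝ,
      (∀ z ∈ closedBall (0 : E) r, ‖z‖ ≤ ‖x‖ →
        ‖iteratedFDerivWithin ℝ (i + j) f (closedBall 0 r) z‖ ≤ B) →
      ‖iteratedFDerivWithin ℝ i f (closedBall 0 r) x‖ ≤ B * ‖x‖ ^ j := by
  intro j
  induction j with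
  | zero =>
    intro i hij x hx B hB
    simpa using hB x hx le_rfl
  | succ j IH =>
    intro i hij x hx B hB
    have hBnn : 0 ≤ B := le_trans (norm_nonneg _) (hB x hx le_rfl)
    have hseg : segment ℝ (0 : E) x ⊆ closedBall 0 r :=
      (convex_closedBall _ _).segment_subset (mem_closedBall_self hr.le) hx
    have hmem : ∀ z ∈ segment ℝ (0 : E) x, ‖z‖ ≤ ‖x‖ := by
      rintro z ⟨a, b, ha, hb, hab, rfl⟩
      rw [smul_zero, zero_add, norm_smul, Real.norm_eq_abs, abs_of_nonneg hb]
      nlinarith [norm_nonneg x]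
    have taylor := hf.ftaylorSeriesWithin hs
    have hder : ∀ z ∈ segment ℝ (0 : E) x,
        HasFDerivWithinAt (iteratedFDerivWithin ℝ i f (closedBall 0 r))
          ((iteratedFDerivWithin ℝ (i + 1) f (closedBall 0 r) z).curryLeft)
          (segment ℝ (0 : E) x) z := by
      intro z hz
      exact (taylor.fderivWithin i (by exact_mod_cast (by omega : i < N)) z (hseg hz)).mono hseg
    have hbound : ∀ z ∈ segment ℝ (0 : E) x,
        ‖(iteratedFDerivWithin ℝ (i + 1) f (closedBall 0 r) z).curryLeft‖ ≤ B * ‖x‖ ^ j := by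
      intro z hz
      rw [ContinuousMultilinearMap.curryLeft_norm]
      have h1 : ‖iteratedFDerivWithin ℝ (i + 1) f (closedBall 0 r) z‖ ≤ B * ‖z‖ ^ j := by
        refine IH (i + 1) (by omega) z (hseg hz) B ?_
        intro z' hz' hzz'
        rw [show i + 1 + j = i + (j + 1) by omega]
        exact hB z' hz' (hzz'.trans (hmem z hz))
      refine h1.trans ?_
      have := pow_le_pow_left₀ (norm_nonneg z) (hmem z hz) j
      nlinarith
    have key := Convex.norm_image_sub_le_of_norm_hasFDerivWithin_le hder hbound
      (convex_segment _ _) (left_mem_segment ℝ (0 : E) x) (right_mem_segment ℝ (0 : E) x)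
    rw [hflat i, sub_zero, sub_zero] at key
    calc ‖iteratedFDerivWithin ℝ i f (closedBall 0 r) x‖ ≤ B * ‖x‖ ^ j * ‖x‖ := key
      _ = B * ‖x‖ ^ (j + 1) := by ring

/-- Decay on the punctured ball, for functions that vanish at linear rate near the origin. -/
lemma decay_punctured {r : ℝ} (hr : 0 < r) {N : ℕ} {h : EuclideanSpace ℝ (Fin m) → ℝ}
    (hs' : UniqueDiffOn ℝ (closedBall (0 : EuclideanSpace ℝ (Fin m)) r \ {0}))
    (hh : ContDiffOn ℝ (N : ℕ∞) h (closedBall 0 r \ {0}))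
    {K : ℝ}
    (hV : ∀ i ≤ N, ∀ z ∈ closedBall (0 : E) r \ {0},
      ‖iteratedFDerivWithin ℝ i h (closedBall 0 r \ {0}) z‖ ≤ K * ‖z‖) :
    ∀ j i : ℕ, i + j ≤ N → ∀ x ∈ closedBall (0 : E) r \ {0}, ∀ B : ℝ,
      (∀ z ∈ closedBall (0 : E) r \ {0}, ‖z‖ ≤ ‖x‖ →
        ‖iteratedFDerivWithin ℝ (i + j) h (closedBall 0 r \ {0}) z‖ ≤ B) →
      ‖iteratedFDerivWithin ℝ i h (closedBall 0 r \ {0}) x‖ ≤ B * ‖x‖ ^ j := by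
  intro j
  induction j with
  | zero =>
    intro i hij x hx B hB
    simpa using hB x hx le_rfl
  | succ j IH =>
    intro i hij x hx B hB
    have hxball : x ∈ closedBall (0 : E) r := hx.1
    have hx0 : x ≠ 0 := hx.2
    have htpos : (0 : ℝ) < ‖x‖ := norm_pos_iff.2 hx0
    have hBnn : 0 ≤ B := le_trans (norm_nonneg _) (hB x hx le_rfl)
    have hKnn : 0 ≤ K := by
      have := le_trans (norm_nonneg _) (hV i (by omega) x hx)
      nlinarith
    -- it suffices to bound by B * ‖x‖^(j+1) + δ for every δ > 0
    refine le_of_forall_pos_le_add ?_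
    intro δ hδ
    set ε : ℝ := min (1/2) (δ / (K * ‖x‖ + 1)) with hε
    have hεpos : 0 < ε := lt_min (by norm_num) (div_pos hδ (by positivity))
    have hεlt : ε < 1 := lt_of_le_of_lt (min_le_left _ _) (by norm_num)
    have hεδ : K * ε * ‖x‖ ≤ δ := by
      have h1 : ε ≤ δ / (K * ‖x‖ + 1) := min_le_right _ _
      have h2 : ε * (K * ‖x‖ + 1) ≤ δ := by
        rw [← le_div_iff₀ (by positivity)]
        exact h1
      nlinarith
    -- the segment from ε • x to x stays in the punctured ball
    have hseg : segment ℝ (ε • x) x ⊆ closedBall (0 : E) r \ {0} := by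
      rintro z ⟨a, b, ha, hb, hab, rfl⟩
      have hz : a • ε • x + b • x = (a * ε + b) • x := by
        rw [smul_smul, ← add_smul]
      rw [hz]
      have htc : 0 < a * ε + b := by nlinarith
      have htc1 : a * ε + b ≤ 1 := by nlinarith
      constructor
      · rw [mem_closedBall_zero_iff, norm_smul, Real.norm_eq_abs, abs_of_pos htc]
        have hxr : ‖x‖ ≤ r := mem_closedBall_zero_iff.1 hxball
        nlinarith
      · simp only [mem_singleton_iff, smul_eq_zero, not_or]
        exact ⟨htc.ne', hx0⟩
    have hmem : ∀ z ∈ segment ℝ (ε • x) x, ‖z‖ ≤ ‖x‖ := by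
      rintro z ⟨a, b, ha, hb, hab, rfl⟩
      rw [smul_smul, ← add_smul, norm_smul, Real.norm_eq_abs]
      have : |a * ε + b| ≤ 1 := by rw [abs_le]; constructor <;> nlinarith
      nlinarith [norm_nonneg x]
    have taylor := hh.ftaylorSeriesWithin hs'
    have hder : ∀ z ∈ segment ℝ (ε • x) x,
        HasFDerivWithinAt (iteratedFDerivWithin ℝ i h (closedBall 0 r \ {0}))
          ((iteratedFDerivWithin ℝ (i + 1) h (closedBall 0 r \ {0}) z).curryLeft)
          (segment ℝ (ε • x) x) z := by
      intro z hz
      exact (taylor.fderivWithin i (by exact_mod_cast (by omega : i < N)) z (hseg hz)).mono hseg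
    have hbound : ∀ z ∈ segment ℝ (ε • x) x,
        ‖(iteratedFDerivWithin ℝ (i + 1) h (closedBall 0 r \ {0}) z).curryLeft‖
          ≤ B * ‖x‖ ^ j := by
      intro z hz
      rw [ContinuousMultilinearMap.curryLeft_norm]
      have h1 : ‖iteratedFDerivWithin ℝ (i + 1) h (closedBall 0 r \ {0}) z‖ ≤ B * ‖z‖ ^ j := by
        refine IH (i + 1) (by omega) z (hseg hz) B ?_
        intro z' hz' hzz'
        rw [show i + 1 + j = i + (j + 1) by omega]
        exact hB z' hz' (hzz'.trans (hmem z hz))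
      refine h1.trans ?_
      have := pow_le_pow_left₀ (norm_nonneg z) (hmem z hz) j
      nlinarith
    have key := Convex.norm_image_sub_le_of_norm_hasFDerivWithin_le hder hbound
      (convex_segment _ _) (left_mem_segment ℝ (ε • x) x) (right_mem_segment ℝ (ε • x) x)
    -- ‖D^i h x - D^i h (ε•x)‖ ≤ B‖x‖^j * ‖x - ε•x‖
    have hεx : ε • x ∈ closedBall (0 : E) r \ {0} := hseg (left_mem_segment ℝ (ε • x) x)
    have hsmall : ‖iteratedFDerivWithin ℝ i h (closedBall 0 r \ {0}) (ε • x)‖ ≤ K * ε * ‖x‖ := by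
      have := hV i (by omega) (ε • x) hεx
      rw [norm_smul, Real.norm_eq_abs, abs_of_pos hεpos] at this
      linarith
    have hxe : ‖x - ε • x‖ ≤ ‖x‖ := by
      have : x - ε • x = (1 - ε) • x := by rw [sub_smul, one_smul]
      rw [this, norm_smul, Real.norm_eq_abs, abs_of_nonneg (by linarith)]
      nlinarith [norm_nonneg x]
    have tri : ‖iteratedFDerivWithin ℝ i h (closedBall 0 r \ {0}) x‖
        ≤ B * ‖x‖ ^ j * ‖x‖ + K * ε * ‖x‖ := by
      have htri := norm_sub_norm_le (iteratedFDerivWithin ℝ i h (closedBall 0 r \ {0}) x)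
        (iteratedFDerivWithin ℝ i h (closedBall 0 r \ {0}) (ε • x))
      have h2 : B * ‖x‖ ^ j * ‖x - ε • x‖ ≤ B * ‖x‖ ^ j * ‖x‖ := by
        have h3 : 0 ≤ B * ‖x‖ ^ j := by positivity
        exact mul_le_mul_of_nonneg_left hxe h3
      linarith [key, hsmall, htri]
    calc ‖iteratedFDerivWithin ℝ i h (closedBall 0 r \ {0}) x‖
        ≤ B * ‖x‖ ^ j * ‖x‖ + K * ε * ‖x‖ := tri
      _ ≤ B * ‖x‖ ^ (j + 1) + δ := by
          have : B * ‖x‖ ^ j * ‖x‖ = B * ‖x‖ ^ (j + 1) := by ring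
          linarith [hεδ]


end FlatAux

open FlatAux

/-- The weighted norm `⟨f⟩_{n,k,r}`:
`sup_{x ∈ B̄_r, x ≠ 0} max_{|a| ≤ n} |x|^{-k} |D^a f(x)|`. -/
noncomputable def flatNorm (m : ℕ) (r : ℝ) (n k : ℕ)
    (f : EuclideanSpace ℝ (Fin m) → ℝ) : ℝ :=
  ⨆ p : (closedBall (0 : EuclideanSpace ℝ (Fin m)) r \ {0} :
      Set (EuclideanSpace ℝ (Fin m))) × Fin (n + 1),
    ‖(p.1 : EuclideanSpace ℝ (Fin m))‖ ^ (-(k : ℤ)) *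
      ‖iteratedFDerivWithin ℝ p.2 f (closedBall 0 r) p.1‖

/-- The norm `|f|_{n,k,r}`: the `C^n` norm (over the punctured closed ball) of the
function `x ↦ |x|^{-k} f(x)`. -/
noncomputable def weightedCnNorm (m : ℕ) (r : ℝ) (n k : ℕ)
    (f : EuclideanSpace ℝ (Fin m) → ℝ) : ℝ :=
  ⨆ p : (closedBall (0 : EuclideanSpace ℝ (Fin m)) r \ {0} :
      Set (EuclideanSpace ℝ (Fin m))) × Fin (n + 1),
    ‖iteratedFDerivWithin ℝ p.2
      (fun y : EuclideanSpace ℝ (Fin m) => ‖y‖ ^ (-(k : ℤ)) * f y)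
      (closedBall 0 r) p.1‖

set_option maxHeartbeats 4000000 in
/-- for all `m ≥ 1`, `n k : ℕ` and `r > 0` there is `C > 0` such that for
every smooth `f` on `B̄_r` flat at the origin,
`C⁻¹ |f|_{n,k,r} ≤ ⟨f⟩_{n,k,r} ≤ C |f|_{n,k,r}`. -/
theorem flatNorm_equiv_weightedCnNorm :
    ∀ m : ℕ, 1 ≤ m → ∀ n k : ℕ, ∀ r : ℝ, 0 < r →
      ∃ C > (0 : ℝ), ∀ f : EuclideanSpace ℝ (Fin m) → ℝ,
        ContDiffOn ℝ (⊤ : ℕ∞) f (closedBall 0 r) →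
        (∀ i : ℕ, iteratedFDerivWithin ℝ i f (closedBall 0 r) 0 = 0) →
        C⁻¹ * weightedCnNorm m r n k f ≤ flatNorm m r n k f ∧
        flatNorm m r n k f ≤ C * weightedCnNorm m r n k f := by
  intro m hm n k r hr
  obtain ⟨CA, hCA0, hCA⟩ := weight_bound (m := m) n (k : ℤ)
  obtain ⟨CB, hCB0, hCB⟩ := weight_bound (m := m) n (-(k : ℤ))
  set C : ℝ := 2 ^ n * max CA CB + 1 with hC
  have hCpos : 0 < C := by positivity
  refine ⟨C, hCpos, ?_⟩
  intro f hf hflat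
  -- basic sets
  set s : Set (EuclideanSpace ℝ (Fin m)) := closedBall 0 r with hs_def
  have hsU : UniqueDiffOn ℝ s := uniqueDiffOn_convex (convex_closedBall _ _)
    (by rw [hs_def, interior_closedBall _ hr.ne']; exact ⟨0, mem_ball_self hr⟩)
  have hs'U : UniqueDiffOn ℝ (s \ {0}) := by
    rw [diff_eq]
    exact hsU.inter isOpen_compl_singleton
  have hΩU : UniqueDiffOn ℝ ({(0 : EuclideanSpace ℝ (Fin m))}ᶜ : Set (EuclideanSpace ℝ (Fin m))) :=
    isOpen_compl_singleton.uniqueDiffOn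
  have hsub : s \ {0} ⊆ ({(0 : EuclideanSpace ℝ (Fin m))}ᶜ : Set (EuclideanSpace ℝ (Fin m))) := fun z hz => hz.2
  -- transfer from punctured ball to ball (no smoothness needed)
  have e1 : ∀ (h : EuclideanSpace ℝ (Fin m) → ℝ) (q : ℕ) (x : EuclideanSpace ℝ (Fin m)),
      x ∈ s \ {0} →
      iteratedFDerivWithin ℝ q h (s \ {0}) x = iteratedFDerivWithin ℝ q h s x := by
    intro h q x hx
    rw [diff_eq]
    exact iteratedFDerivWithin_inter_open isOpen_compl_singleton hx.2
  -- weight functions on the punctured ball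
  have wbd : ∀ (e : ℤ) (Ce : ℝ), (∀ q ≤ n, ∀ x : EuclideanSpace ℝ (Fin m), x ≠ 0 →
        ‖iteratedFDerivWithin ℝ q (fun y : EuclideanSpace ℝ (Fin m) => ‖y‖ ^ e) {(0 : EuclideanSpace ℝ (Fin m))}ᶜ x‖ ≤ Ce * ‖x‖ ^ (e - q)) →
      ∀ q ≤ n, ∀ x ∈ s \ {0},
        ‖iteratedFDerivWithin ℝ q (fun y : EuclideanSpace ℝ (Fin m) => ‖y‖ ^ e) (s \ {0}) x‖ ≤ Ce * ‖x‖ ^ (e - q) := by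
    intro e Ce hCe q hq x hx
    rw [iteratedFDerivWithin_subset_eq hsub hΩU hs'U
      ((contDiffOn_norm_zpow e).of_le (le_coe_top n)) hq hx]
    exact hCe q hq x hx.2
  have hwA := wbd (k : ℤ) CA (fun q hq x hx => hCA q hq x hx)
  have hwB := wbd (-(k : ℤ)) CB (fun q hq x hx => hCB q hq x hx)
  -- global bound on the derivatives of f up to order n + k + 1
  have hMq : ∀ q : ℕ, ∃ Mq : ℝ, ∀ z ∈ s, ‖iteratedFDerivWithin ℝ q f s z‖ ≤ Mq := by
    intro q
    obtain ⟨Mq, hMq⟩ := (isCompact_closedBall (0 : EuclideanSpace ℝ (Fin m)) r).exists_bound_of_continuousOn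
      (hf.continuousOn_iteratedFDerivWithin (le_coe_top q) hsU)
    exact ⟨Mq, hMq⟩
  choose M hM using hMq
  set Mtot : ℝ := 1 + ∑ q ∈ Finset.range (n + k + 2), max (M q) 0 with hMtot_def
  have hMtot_pos : 0 < Mtot := by
    have : 0 ≤ ∑ q ∈ Finset.range (n + k + 2), max (M q) 0 :=
      Finset.sum_nonneg fun i _ => le_max_right _ _
    rw [hMtot_def]; linarith
  have hMtot : ∀ q ≤ n + k + 1, ∀ z ∈ s, ‖iteratedFDerivWithin ℝ q f s z‖ ≤ Mtot := by
    intro q hq z hz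
    have h1 : M q ≤ max (M q) 0 := le_max_left _ _
    have h2 : max (M q) 0 ≤ ∑ q' ∈ Finset.range (n + k + 2), max (M q') 0 :=
      Finset.single_le_sum (f := fun q' => max (M q') 0) (fun i _ => le_max_right _ _)
        (Finset.mem_range.2 (by omega : q < n + k + 2))
    have := hM q z hz
    rw [hMtot_def]; linarith
  -- decay of f
  have hfN : ContDiffOn ℝ ((n + k + 1 : ℕ) : ℕ∞) f s := hf.of_le (le_coe_top _)
  have Df := decay_ball hr hsU hfN hflat
  -- the index type is nonempty
  set x₀ : EuclideanSpace ℝ (Fin m) := EuclideanSpace.single (⟨0, hm⟩ : Fin m) r with hx₀def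
  have hx₀norm : ‖x₀‖ = r := by
    rw [hx₀def, EuclideanSpace.norm_single, Real.norm_eq_abs, abs_of_pos hr]
  have hx₀ : x₀ ∈ s \ {0} := by
    constructor
    · rw [hs_def, mem_closedBall_zero_iff, hx₀norm]
    · simp only [mem_singleton_iff]
      intro h0
      rw [h0] at hx₀norm
      simp at hx₀norm
      exact hr.ne' hx₀norm.symm
  haveI hNe : Nonempty ((s \ {0} : Set (EuclideanSpace ℝ (Fin m))) × Fin (n + 1)) :=
    ⟨⟨⟨x₀, hx₀⟩, 0⟩⟩
  -- rewrite the two norms as suprema over the index type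
  have hAeq : flatNorm m r n k f =
      ⨆ p : (s \ {0} : Set (EuclideanSpace ℝ (Fin m))) × Fin (n + 1),
        ‖(p.1 : EuclideanSpace ℝ (Fin m))‖ ^ (-(k : ℤ)) *
          ‖iteratedFDerivWithin ℝ p.2 f s p.1‖ := by
    rw [hs_def]; rfl
  have hBeq : weightedCnNorm m r n k f =
      ⨆ p : (s \ {0} : Set (EuclideanSpace ℝ (Fin m))) × Fin (n + 1),
        ‖iteratedFDerivWithin ℝ p.2
          (fun y : EuclideanSpace ℝ (Fin m) => ‖y‖ ^ (-(k : ℤ)) * f y) s p.1‖ := by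
    rw [hs_def]; rfl
  set A : ℝ := flatNorm m r n k f with hA_def
  set B : ℝ := weightedCnNorm m r n k f with hB_def
  -- pointwise bound on the flat-norm supremand
  have hAp : ∀ p : (s \ {0} : Set (EuclideanSpace ℝ (Fin m))) × Fin (n + 1),
      ‖(p.1 : EuclideanSpace ℝ (Fin m))‖ ^ (-(k : ℤ)) *
        ‖iteratedFDerivWithin ℝ p.2 f s p.1‖ ≤ Mtot := by
    rintro ⟨⟨x, hx⟩, ifin⟩
    simp only
    have hx0 : x ≠ 0 := hx.2
    have ht : (0 : ℝ) < ‖x‖ := norm_pos_iff.2 hx0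
    have hi : (ifin : ℕ) ≤ n := by omega
    have hd : ‖iteratedFDerivWithin ℝ (ifin : ℕ) f s x‖ ≤ Mtot * ‖x‖ ^ (k : ℕ) := by
      refine Df k ifin (by omega) x hx.1 Mtot ?_
      intro z hz _
      exact hMtot ((ifin : ℕ) + k) (by omega) z hz
    calc ‖x‖ ^ (-(k : ℤ)) * ‖iteratedFDerivWithin ℝ (ifin : ℕ) f s x‖
        ≤ ‖x‖ ^ (-(k : ℤ)) * (Mtot * ‖x‖ ^ (k : ℕ)) :=
          mul_le_mul_of_nonneg_left hd (zpow_nonneg ht.le _)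
      _ = Mtot * (‖x‖ ^ (-(k : ℤ)) * ‖x‖ ^ (k : ℕ)) := by ring
      _ = Mtot := by rw [zp2 ht.ne']; simp
  have hAbdd : BddAbove (range fun p : (s \ {0} : Set (EuclideanSpace ℝ (Fin m))) × Fin (n+1) =>
      ‖(p.1 : EuclideanSpace ℝ (Fin m))‖ ^ (-(k : ℤ)) *
        ‖iteratedFDerivWithin ℝ p.2 f s p.1‖) :=
    ⟨Mtot, by rintro _ ⟨p, rfl⟩; exact hAp p⟩
  have hA_nonneg : 0 ≤ A := by
    rw [hAeq]
    refine le_trans ?_ (le_ciSup hAbdd ⟨⟨x₀, hx₀⟩, 0⟩)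
    positivity
  -- derived bound: the derivatives of f vanish to order k, with constant A
  have hAf : ∀ i ≤ n, ∀ z ∈ s, ‖iteratedFDerivWithin ℝ i f s z‖ ≤ A * ‖z‖ ^ (k : ℕ) := by
    intro i hi z hz
    by_cases hz0 : z = 0
    · rw [hz0, hflat i]
      simp only [norm_zero]
      positivity
    · have ht : (0 : ℝ) < ‖z‖ := norm_pos_iff.2 hz0
      have hle : ‖z‖ ^ (-(k : ℤ)) * ‖iteratedFDerivWithin ℝ i f s z‖ ≤ A := by
        rw [hAeq]
        exact le_ciSup hAbdd ⟨⟨z, ⟨hz, hz0⟩⟩, ⟨i, by omega⟩⟩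
      have hcancel : ‖z‖ ^ (k : ℕ) * ‖z‖ ^ (-(k : ℤ)) = 1 := by
        rw [mul_comm, zp2 ht.ne']; simp
      calc ‖iteratedFDerivWithin ℝ i f s z‖
          = (‖z‖ ^ (k : ℕ) * ‖z‖ ^ (-(k : ℤ))) * ‖iteratedFDerivWithin ℝ i f s z‖ := by
            rw [hcancel, one_mul]
        _ = ‖z‖ ^ (k : ℕ) * (‖z‖ ^ (-(k : ℤ)) * ‖iteratedFDerivWithin ℝ i f s z‖) := by ring
        _ ≤ ‖z‖ ^ (k : ℕ) * A := mul_le_mul_of_nonneg_left hle (pow_nonneg (norm_nonneg z) k)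
        _ = A * ‖z‖ ^ (k : ℕ) := mul_comm _ _
  -- smoothness of the pieces on the punctured ball
  have hwBs : ContDiffOn ℝ ((n : ℕ) : ℕ∞)
      (fun y : EuclideanSpace ℝ (Fin m) => ‖y‖ ^ (-(k : ℤ))) (s \ {0}) :=
    ((contDiffOn_norm_zpow _).mono hsub).of_le (le_coe_top n)
  have hwAs : ContDiffOn ℝ ((n : ℕ) : ℕ∞)
      (fun y : EuclideanSpace ℝ (Fin m) => ‖y‖ ^ ((k : ℤ))) (s \ {0}) :=
    ((contDiffOn_norm_zpow _).mono hsub).of_le (le_coe_top n)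
  have hfs' : ContDiffOn ℝ ((n : ℕ) : ℕ∞) f (s \ {0}) :=
    (hf.mono diff_subset).of_le (le_coe_top n)
  have hg' : ContDiffOn ℝ ((n : ℕ) : ℕ∞)
      (fun y : EuclideanSpace ℝ (Fin m) => ‖y‖ ^ (-(k : ℤ)) * f y) (s \ {0}) := hwBs.mul hfs'
  -- pointwise bound: weighted norm supremand ≤ 2^n * CB * A
  have hBp : ∀ p : (s \ {0} : Set (EuclideanSpace ℝ (Fin m))) × Fin (n + 1),
      ‖iteratedFDerivWithin ℝ p.2
        (fun y : EuclideanSpace ℝ (Fin m) => ‖y‖ ^ (-(k : ℤ)) * f y) s p.1‖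
        ≤ 2 ^ n * CB * A := by
    rintro ⟨⟨x, hx⟩, ifin⟩
    simp only
    have hx0 : x ≠ 0 := hx.2
    have ht : (0 : ℝ) < ‖x‖ := norm_pos_iff.2 hx0
    have hi : (ifin : ℕ) ≤ n := by omega
    rw [← e1 _ _ x hx]
    have leib := norm_iteratedFDerivWithin_mul_le (𝕜 := ℝ) hwBs hfs' hs'U hx
      (n := (ifin : ℕ)) (by exact_mod_cast hi)
    refine leib.trans ?_
    have term : ∀ q ∈ Finset.range ((ifin : ℕ) + 1),
        ((ifin : ℕ).choose q : ℝ) *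
          ‖iteratedFDerivWithin ℝ q
            (fun y : EuclideanSpace ℝ (Fin m) => ‖y‖ ^ (-(k : ℤ))) (s \ {0}) x‖ *
          ‖iteratedFDerivWithin ℝ ((ifin : ℕ) - q) f (s \ {0}) x‖
        ≤ ((ifin : ℕ).choose q : ℝ) * (CB * A) := by
      intro q hq
      rw [Finset.mem_range] at hq
      have hqi : q ≤ (ifin : ℕ) := by omega
      have h1 := hwB q (by omega) x hx
      have h2 : ‖iteratedFDerivWithin ℝ ((ifin : ℕ) - q) f (s \ {0}) x‖
          ≤ (A * ‖x‖ ^ (k : ℕ)) * ‖x‖ ^ (q : ℕ) := by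
        rw [e1 _ _ x hx]
        refine Df q ((ifin : ℕ) - q) (by omega) x hx.1 _ ?_
        intro z hz hzx
        rw [show (ifin : ℕ) - q + q = (ifin : ℕ) by omega]
        calc ‖iteratedFDerivWithin ℝ (ifin : ℕ) f s z‖
            ≤ A * ‖z‖ ^ (k : ℕ) := hAf _ hi z hz
          _ ≤ A * ‖x‖ ^ (k : ℕ) :=
              mul_le_mul_of_nonneg_left (pow_le_pow_left₀ (norm_nonneg z) hzx k) hA_nonneg
      calc ((ifin : ℕ).choose q : ℝ) *
          ‖iteratedFDerivWithin ℝ q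
            (fun y : EuclideanSpace ℝ (Fin m) => ‖y‖ ^ (-(k : ℤ))) (s \ {0}) x‖ *
          ‖iteratedFDerivWithin ℝ ((ifin : ℕ) - q) f (s \ {0}) x‖
          ≤ ((ifin : ℕ).choose q : ℝ) * (CB * ‖x‖ ^ ((-(k : ℤ)) - q)) *
            ((A * ‖x‖ ^ (k : ℕ)) * ‖x‖ ^ (q : ℕ)) := by
            refine mul_le_mul ?_ h2 (norm_nonneg _) (by positivity)
            exact mul_le_mul_of_nonneg_left h1 (by positivity)
        _ = ((ifin : ℕ).choose q : ℝ) * (CB * A) *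
            (‖x‖ ^ ((-(k : ℤ)) - q) * ‖x‖ ^ (k : ℕ) * ‖x‖ ^ (q : ℕ)) := by ring
        _ = ((ifin : ℕ).choose q : ℝ) * (CB * A) := by
            rw [zpnn ht.ne', show (-(k : ℤ)) - q + (k : ℤ) + (q : ℤ) = 0 by ring, zpow_zero,
              mul_one]
    calc (∑ q ∈ Finset.range ((ifin : ℕ) + 1), ((ifin : ℕ).choose q : ℝ) *
          ‖iteratedFDerivWithin ℝ q
            (fun y : EuclideanSpace ℝ (Fin m) => ‖y‖ ^ (-(k : ℤ))) (s \ {0}) x‖ *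
          ‖iteratedFDerivWithin ℝ ((ifin : ℕ) - q) f (s \ {0}) x‖)
        ≤ ∑ q ∈ Finset.range ((ifin : ℕ) + 1), ((ifin : ℕ).choose q : ℝ) * (CB * A) :=
          Finset.sum_le_sum term
      _ = (2 : ℝ) ^ (ifin : ℕ) * (CB * A) := by
          rw [← Finset.sum_mul]
          congr 1
          have := Nat.sum_range_choose (ifin : ℕ)
          have hcast : (∑ q ∈ Finset.range ((ifin : ℕ) + 1), ((ifin : ℕ).choose q : ℝ))
              = ((2 ^ (ifin : ℕ) : ℕ) : ℝ) := by
            rw [← this]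
            push_cast
            ring
          rw [hcast]
          push_cast
          ring
      _ ≤ 2 ^ n * CB * A := by
          have h2i : (2 : ℝ) ^ (ifin : ℕ) ≤ 2 ^ n := by
            apply pow_le_pow_right₀ one_le_two hi
          have hCBA : 0 ≤ CB * A := mul_nonneg hCB0.le hA_nonneg
          calc (2 : ℝ) ^ (ifin : ℕ) * (CB * A) ≤ 2 ^ n * (CB * A) :=
              mul_le_mul_of_nonneg_right h2i hCBA
            _ = 2 ^ n * CB * A := by ring
  have hBbdd : BddAbove (range fun p : (s \ {0} : Set (EuclideanSpace ℝ (Fin m))) × Fin (n+1) =>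
      ‖iteratedFDerivWithin ℝ p.2
        (fun y : EuclideanSpace ℝ (Fin m) => ‖y‖ ^ (-(k : ℤ)) * f y) s p.1‖) :=
    ⟨2 ^ n * CB * A, by rintro _ ⟨p, rfl⟩; exact hBp p⟩
  have hB_le : B ≤ 2 ^ n * CB * A := by
    rw [hBeq]
    exact ciSup_le hBp
  have hB_nonneg : 0 ≤ B := by
    rw [hBeq]
    refine le_trans ?_ (le_ciSup hBbdd ⟨⟨x₀, hx₀⟩, 0⟩)
    positivity
  -- linear vanishing of g = ‖·‖^{-k} f near the origin
  set K : ℝ := 2 ^ n * CB * Mtot with hK_def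
  have hgV : ∀ i ≤ n, ∀ z ∈ s \ {0},
      ‖iteratedFDerivWithin ℝ i
        (fun y : EuclideanSpace ℝ (Fin m) => ‖y‖ ^ (-(k : ℤ)) * f y) (s \ {0}) z‖
        ≤ K * ‖z‖ := by
    intro i hi z hz
    have hz0 : z ≠ 0 := hz.2
    have ht : (0 : ℝ) < ‖z‖ := norm_pos_iff.2 hz0
    have leib := norm_iteratedFDerivWithin_mul_le (𝕜 := ℝ) hwBs hfs' hs'U hz
      (n := i) (by exact_mod_cast hi)
    refine leib.trans ?_
    have term : ∀ q ∈ Finset.range (i + 1),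
        (i.choose q : ℝ) *
          ‖iteratedFDerivWithin ℝ q
            (fun y : EuclideanSpace ℝ (Fin m) => ‖y‖ ^ (-(k : ℤ))) (s \ {0}) z‖ *
          ‖iteratedFDerivWithin ℝ (i - q) f (s \ {0}) z‖
        ≤ (i.choose q : ℝ) * (CB * Mtot * ‖z‖) := by
      intro q hq
      rw [Finset.mem_range] at hq
      have h1 := hwB q (by omega) z hz
      have h2 : ‖iteratedFDerivWithin ℝ (i - q) f (s \ {0}) z‖
          ≤ Mtot * ‖z‖ ^ ((k + q + 1 : ℕ)) := by
        rw [e1 _ _ z hz]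
        refine Df (k + q + 1) (i - q) (by omega) z hz.1 Mtot ?_
        intro z' hz' _
        exact hMtot (i - q + (k + q + 1)) (by omega) z' hz'
      calc (i.choose q : ℝ) *
          ‖iteratedFDerivWithin ℝ q
            (fun y : EuclideanSpace ℝ (Fin m) => ‖y‖ ^ (-(k : ℤ))) (s \ {0}) z‖ *
          ‖iteratedFDerivWithin ℝ (i - q) f (s \ {0}) z‖
          ≤ (i.choose q : ℝ) * (CB * ‖z‖ ^ ((-(k : ℤ)) - q)) *
            (Mtot * ‖z‖ ^ ((k + q + 1 : ℕ))) := by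
            refine mul_le_mul ?_ h2 (norm_nonneg _) (by positivity)
            exact mul_le_mul_of_nonneg_left h1 (by positivity)
        _ = (i.choose q : ℝ) * (CB * Mtot) *
            (‖z‖ ^ ((-(k : ℤ)) - q) * ‖z‖ ^ ((k + q + 1 : ℕ))) := by ring
        _ = (i.choose q : ℝ) * (CB * Mtot * ‖z‖) := by
            rw [zp2 ht.ne', show (-(k : ℤ)) - q + ((k + q + 1 : ℕ) : ℤ) = 1 by push_cast; ring,
              zpow_one]
            ring
    calc (∑ q ∈ Finset.range (i + 1), (i.choose q : ℝ) *
          ‖iteratedFDerivWithin ℝ q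
            (fun y : EuclideanSpace ℝ (Fin m) => ‖y‖ ^ (-(k : ℤ))) (s \ {0}) z‖ *
          ‖iteratedFDerivWithin ℝ (i - q) f (s \ {0}) z‖)
        ≤ ∑ q ∈ Finset.range (i + 1), (i.choose q : ℝ) * (CB * Mtot * ‖z‖) :=
          Finset.sum_le_sum term
      _ = (2 : ℝ) ^ i * (CB * Mtot * ‖z‖) := by
          rw [← Finset.sum_mul]
          congr 1
          have hcast : (∑ q ∈ Finset.range (i + 1), (i.choose q : ℝ))
              = ((2 ^ i : ℕ) : ℝ) := by
            rw [← Nat.sum_range_choose i]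
            push_cast
            ring
          rw [hcast]
          push_cast
          ring
      _ ≤ K * ‖z‖ := by
          rw [hK_def]
          have h2i : (2 : ℝ) ^ i ≤ 2 ^ n := pow_le_pow_right₀ one_le_two hi
          have : 0 ≤ CB * Mtot * ‖z‖ := by positivity
          nlinarith
  have hgdec := decay_punctured hr hs'U hg' hgV
  -- splitting f = ‖·‖^k · g on the punctured ball
  have hFeq : EqOn (fun y : EuclideanSpace ℝ (Fin m) =>
      ‖y‖ ^ ((k : ℤ)) * (‖y‖ ^ (-(k : ℤ)) * f y)) f (s \ {0}) := by
    intro z hz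
    have ht : ‖z‖ ≠ 0 := norm_ne_zero_iff.2 hz.2
    simp only
    rw [← mul_assoc, ← zpow_add₀ ht, show (k : ℤ) + (-(k : ℤ)) = 0 by ring, zpow_zero, one_mul]
  have hAp2 : ∀ p : (s \ {0} : Set (EuclideanSpace ℝ (Fin m))) × Fin (n + 1),
      ‖(p.1 : EuclideanSpace ℝ (Fin m))‖ ^ (-(k : ℤ)) *
        ‖iteratedFDerivWithin ℝ p.2 f s p.1‖ ≤ 2 ^ n * CA * B := by
    rintro ⟨⟨x, hx⟩, ifin⟩
    simp only
    have hx0 : x ≠ 0 := hx.2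
    have ht : (0 : ℝ) < ‖x‖ := norm_pos_iff.2 hx0
    have hi : (ifin : ℕ) ≤ n := by omega
    rw [← e1 _ _ x hx, ← iteratedFDerivWithin_congr hFeq hx (ifin : ℕ)]
    have leib := norm_iteratedFDerivWithin_mul_le (𝕜 := ℝ) hwAs hg' hs'U hx
      (n := (ifin : ℕ)) (by exact_mod_cast hi)
    have term : ∀ q ∈ Finset.range ((ifin : ℕ) + 1),
        ((ifin : ℕ).choose q : ℝ) *
          ‖iteratedFDerivWithin ℝ q
            (fun y : EuclideanSpace ℝ (Fin m) => ‖y‖ ^ ((k : ℤ))) (s \ {0}) x‖ *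
          ‖iteratedFDerivWithin ℝ ((ifin : ℕ) - q)
            (fun y : EuclideanSpace ℝ (Fin m) => ‖y‖ ^ (-(k : ℤ)) * f y) (s \ {0}) x‖
        ≤ ((ifin : ℕ).choose q : ℝ) * (CA * B * ‖x‖ ^ ((k : ℤ))) := by
      intro q hq
      rw [Finset.mem_range] at hq
      have h1 := hwA q (by omega) x hx
      have h2 : ‖iteratedFDerivWithin ℝ ((ifin : ℕ) - q)
          (fun y : EuclideanSpace ℝ (Fin m) => ‖y‖ ^ (-(k : ℤ)) * f y) (s \ {0}) x‖
          ≤ B * ‖x‖ ^ (q : ℕ) := by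
        refine hgdec q ((ifin : ℕ) - q) (by omega) x hx B ?_
        intro z hz hzx
        rw [show (ifin : ℕ) - q + q = (ifin : ℕ) by omega, e1 _ _ z hz]
        rw [hBeq]
        exact le_ciSup hBbdd ⟨⟨z, hz⟩, ⟨(ifin : ℕ), by omega⟩⟩
      calc ((ifin : ℕ).choose q : ℝ) *
          ‖iteratedFDerivWithin ℝ q
            (fun y : EuclideanSpace ℝ (Fin m) => ‖y‖ ^ ((k : ℤ))) (s \ {0}) x‖ *
          ‖iteratedFDerivWithin ℝ ((ifin : ℕ) - q)
            (fun y : EuclideanSpace ℝ (Fin m) => ‖y‖ ^ (-(k : ℤ)) * f y) (s \ {0}) x‖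
          ≤ ((ifin : ℕ).choose q : ℝ) * (CA * ‖x‖ ^ ((k : ℤ) - q)) * (B * ‖x‖ ^ (q : ℕ)) := by
            refine mul_le_mul ?_ h2 (norm_nonneg _) (by positivity)
            exact mul_le_mul_of_nonneg_left h1 (by positivity)
        _ = ((ifin : ℕ).choose q : ℝ) * (CA * B) * (‖x‖ ^ ((k : ℤ) - q) * ‖x‖ ^ (q : ℕ)) := by
            ring
        _ = ((ifin : ℕ).choose q : ℝ) * (CA * B * ‖x‖ ^ ((k : ℤ))) := by
            rw [zp2 ht.ne', show (k : ℤ) - q + (q : ℤ) = (k : ℤ) by ring]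
            ring
    have hsum : ‖iteratedFDerivWithin ℝ (ifin : ℕ)
        (fun y : EuclideanSpace ℝ (Fin m) =>
          ‖y‖ ^ ((k : ℤ)) * (‖y‖ ^ (-(k : ℤ)) * f y)) (s \ {0}) x‖
        ≤ 2 ^ n * (CA * B * ‖x‖ ^ ((k : ℤ))) := by
      refine leib.trans ?_
      calc (∑ q ∈ Finset.range ((ifin : ℕ) + 1), ((ifin : ℕ).choose q : ℝ) *
            ‖iteratedFDerivWithin ℝ q
              (fun y : EuclideanSpace ℝ (Fin m) => ‖y‖ ^ ((k : ℤ))) (s \ {0}) x‖ *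
            ‖iteratedFDerivWithin ℝ ((ifin : ℕ) - q)
              (fun y : EuclideanSpace ℝ (Fin m) => ‖y‖ ^ (-(k : ℤ)) * f y) (s \ {0}) x‖)
          ≤ ∑ q ∈ Finset.range ((ifin : ℕ) + 1),
              ((ifin : ℕ).choose q : ℝ) * (CA * B * ‖x‖ ^ ((k : ℤ))) :=
            Finset.sum_le_sum term
        _ = (2 : ℝ) ^ (ifin : ℕ) * (CA * B * ‖x‖ ^ ((k : ℤ))) := by
            rw [← Finset.sum_mul]
            congr 1
            have hcast : (∑ q ∈ Finset.range ((ifin : ℕ) + 1), ((ifin : ℕ).choose q : ℝ))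
                = ((2 ^ (ifin : ℕ) : ℕ) : ℝ) := by
              rw [← Nat.sum_range_choose ((ifin : ℕ))]
              push_cast
              ring
            rw [hcast]
            push_cast
            ring
        _ ≤ 2 ^ n * (CA * B * ‖x‖ ^ ((k : ℤ))) := by
            have h2i : (2 : ℝ) ^ (ifin : ℕ) ≤ 2 ^ n := pow_le_pow_right₀ one_le_two hi
            have : (0:ℝ) ≤ CA * B * ‖x‖ ^ ((k : ℤ)) := by positivity
            nlinarith
    calc ‖x‖ ^ (-(k : ℤ)) * ‖iteratedFDerivWithin ℝ (ifin : ℕ)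
          (fun y : EuclideanSpace ℝ (Fin m) =>
            ‖y‖ ^ ((k : ℤ)) * (‖y‖ ^ (-(k : ℤ)) * f y)) (s \ {0}) x‖
        ≤ ‖x‖ ^ (-(k : ℤ)) * (2 ^ n * (CA * B * ‖x‖ ^ ((k : ℤ)))) :=
          mul_le_mul_of_nonneg_left hsum (zpow_nonneg ht.le _)
      _ = 2 ^ n * CA * B * (‖x‖ ^ (-(k : ℤ)) * ‖x‖ ^ ((k : ℤ))) := by ring
      _ = 2 ^ n * CA * B := by
          rw [← zpow_add₀ ht.ne', show (-(k : ℤ)) + (k : ℤ) = 0 by ring, zpow_zero, mul_one]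
  have hA_le2 : A ≤ 2 ^ n * CA * B := by
    rw [hAeq]
    exact ciSup_le hAp2
  -- conclusion
  have hfin1 : B ≤ C * A := by
    refine hB_le.trans ?_
    have h1 : (2 : ℝ) ^ n * CB ≤ C := by
      rw [hC]
      have := le_max_right CA CB
      have h2 : (0:ℝ) < 2 ^ n := by positivity
      nlinarith
    calc (2:ℝ) ^ n * CB * A = ((2:ℝ) ^ n * CB) * A := by ring
      _ ≤ C * A := mul_le_mul_of_nonneg_right h1 hA_nonneg
  have hfin2 : A ≤ C * B := by
    refine hA_le2.trans ?_
    have h1 : (2 : ℝ) ^ n * CA ≤ C := by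
      rw [hC]
      have := le_max_left CA CB
      have h2 : (0:ℝ) < 2 ^ n := by positivity
      nlinarith
    calc (2:ℝ) ^ n * CA * B = ((2:ℝ) ^ n * CA) * B := by ring
      _ ≤ C * B := mul_le_mul_of_nonneg_right h1 hB_nonneg
  constructor
  · calc C⁻¹ * B ≤ C⁻¹ * (C * A) :=
        mul_le_mul_of_nonneg_left hfin1 (inv_nonneg.2 hCpos.le)
      _ = A := by field_simp
  · exact hfin2
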